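/- Assume condition (C3), i.e., r is antisymmetric. Let P be the set of primitive subsets of K and let C be the set of representatives of pure ascending chains. Then the quotient of the power set of K by ~ is countably infinite if and only if P and C are both countable and at least one of them is countably infinite; and this quotient is uncountable if and only if P is uncountable or C is uncountable. -/

import Mathlib

variable {K : Type*}

/-- The equivalence relation `I ~ J` between subsets of `K`:
for every `i ∈ I` there is `j ∈ J` with `r i j`, and
for every `j ∈ J` there is `i ∈ I` with `r j i`. -/
def SetEquiv (r : K → K → Prop) (I J : Set K) : Prop :=
  (∀ i ∈ I, ∃ j ∈ J, r i j) ∧ (∀ j ∈ J, ∃ i ∈ I, r j i)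

/-- A subset `I ⊆ K` is primitive if for all distinct `i, j ∈ I`,
neither `r i j` nor `r j i` holds. -/
def Primitive (r : K → K → Prop) (I : Set K) : Prop :=
  ∀ i ∈ I, ∀ j ∈ I, i ≠ j → ¬ r i j ∧ ¬ r j i

/-- `I_M`: the set of maximal elements of `I`. -/
def partM (r : K → K → Prop) (I : Set K) : Set K :=
  {i | i ∈ I ∧ ∀ j ∈ I, j ≠ i → ¬ r i j}

/-- `I_d`: elements of `I` lying `r`-below a maximal element of `I`. -/
def partD (r : K → K → Prop) (I : Set K) : Set K :=
  {i | i ∈ I ∧ ∃ j ∈ partM r I, r i j}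

/-- `I_c := I \ I_d`. -/
def partC (r : K → K → Prop) (I : Set K) : Set K :=
  I \ partD r I

/-- `I⁺ := {i ∈ K : ∃ j ∈ I, r i j}`. -/
def plusSet (r : K → K → Prop) (I : Set K) : Set K :=
  {i | ∃ j ∈ I, r i j}

/-- The set of representatives of pure ascending chains. -/
def chainReps (r : K → K → Prop) : Set (Set K) :=
  {I | ∃ J : Set K, J = partC r J ∧ plusSet r J = I}

/-- `~` as a setoid on the power set of `K`. -/
def setEquivSetoid (r : K → K → Prop) (hrefl : ∀ i, r i i)
    (htrans : ∀ i j k, r i j → r j k → r i k) : Setoid (Set K) where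
  r := SetEquiv r
  iseqv := by
    constructor
    · intro I
      exact ⟨fun i hi => ⟨i, hi, hrefl i⟩, fun i hi => ⟨i, hi, hrefl i⟩⟩
    · intro I J h
      exact ⟨h.2, h.1⟩
    · intro I J L h1 h2
      constructor
      · intro i hi
        obtain ⟨j, hj, hij⟩ := h1.1 i hi
        obtain ⟨l, hl, hjl⟩ := h2.1 j hj
        exact ⟨l, hl, htrans i j l hij hjl⟩
      · intro l hl
        obtain ⟨j, hj, hlj⟩ := h2.2 l hl
        obtain ⟨i, hi, hji⟩ := h1.2 j hj
        exact ⟨i, hi, htrans l j i hlj hji⟩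

section Aux

variable {r : K → K → Prop}

lemma setEquiv_symm {I J : Set K} (h : SetEquiv r I J) : SetEquiv r J I := ⟨h.2, h.1⟩

lemma setEquiv_trans (htrans : ∀ i j k, r i j → r j k → r i k)
    {I J L : Set K} (h1 : SetEquiv r I J) (h2 : SetEquiv r J L) : SetEquiv r I L := by
  constructor
  · intro i hi
    obtain ⟨j, hj, hij⟩ := h1.1 i hi
    obtain ⟨l, hl, hjl⟩ := h2.1 j hj
    exact ⟨l, hl, htrans i j l hij hjl⟩
  · intro l hl
    obtain ⟨j, hj, hlj⟩ := h2.2 l hl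
    obtain ⟨i, hi, hji⟩ := h1.2 j hj
    exact ⟨i, hi, htrans l j i hlj hji⟩

lemma partM_subset_of_equiv (htrans : ∀ i j k, r i j → r j k → r i k)
    (hanti : ∀ i j, r i j → r j i → i = j)
    {I J : Set K} (h : SetEquiv r I J) : partM r I ⊆ partM r J := by
  rintro i ⟨hiI, hmax⟩
  obtain ⟨j, hjJ, hij⟩ := h.1 i hiI
  obtain ⟨i', hi'I, hji'⟩ := h.2 j hjJ
  have hii' : r i i' := htrans _ _ _ hij hji'
  have hI : i' = i := by
    by_contra hne
    exact hmax i' hi'I hne hii'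
  have hji : j = i := hanti _ _ (hI ▸ hji') hij
  refine ⟨hji ▸ hjJ, ?_⟩
  intro j' hj'J hne hij'
  obtain ⟨i'', hi''I, hj'i''⟩ := h.2 j' hj'J
  have hii'' : r i i'' := htrans _ _ _ hij' hj'i''
  have he : i'' = i := by
    by_contra hne'
    exact hmax i'' hi''I hne' hii''
  exact hne (hanti _ _ (he ▸ hj'i'') hij')

lemma partM_eq_of_equiv (htrans : ∀ i j k, r i j → r j k → r i k)
    (hanti : ∀ i j, r i j → r j i → i = j)
    {I J : Set K} (h : SetEquiv r I J) : partM r I = partM r J :=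
  subset_antisymm (partM_subset_of_equiv htrans hanti h)
    (partM_subset_of_equiv htrans hanti (setEquiv_symm h))

lemma partC_mem_of_equiv (htrans : ∀ i j k, r i j → r j k → r i k)
    (hanti : ∀ i j, r i j → r j i → i = j)
    {I J : Set K} (h : SetEquiv r I J) {i : K} (hi : i ∈ partC r I) :
    ∃ j ∈ partC r J, r i j := by
  obtain ⟨j, hjJ, hij⟩ := h.1 i hi.1
  refine ⟨j, ⟨hjJ, ?_⟩, hij⟩
  intro hjd
  obtain ⟨m, hm, hjm⟩ := hjd.2
  rw [← partM_eq_of_equiv htrans hanti h] at hm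
  exact hi.2 ⟨hi.1, m, hm, htrans _ _ _ hij hjm⟩

lemma plus_partC_eq_of_equiv (htrans : ∀ i j k, r i j → r j k → r i k)
    (hanti : ∀ i j, r i j → r j i → i = j)
    {I J : Set K} (h : SetEquiv r I J) :
    plusSet r (partC r I) = plusSet r (partC r J) := by
  have key : ∀ {A B : Set K}, SetEquiv r A B →
      plusSet r (partC r A) ⊆ plusSet r (partC r B) := by
    rintro A B hAB i ⟨k, hk, hik⟩
    obtain ⟨j, hj, hkj⟩ := partC_mem_of_equiv htrans hanti hAB hk
    exact ⟨j, hj, htrans _ _ _ hik hkj⟩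
  exact subset_antisymm (key h) (key (setEquiv_symm h))

lemma canonical_equiv (hrefl : ∀ i, r i i) (I : Set K) :
    SetEquiv r I (partM r I ∪ plusSet r (partC r I)) := by
  constructor
  · intro i hiI
    by_cases hd : i ∈ partD r I
    · obtain ⟨m, hm, him⟩ := hd.2
      exact ⟨m, Or.inl hm, him⟩
    · exact ⟨i, Or.inr ⟨i, ⟨hiI, hd⟩, hrefl i⟩, hrefl i⟩
  · rintro j (hj | ⟨k, hk, hjk⟩)
    · exact ⟨j, hj.1, hrefl j⟩
    · exact ⟨k, hk.1, hjk⟩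

lemma primitive_partM (I : Set K) : Primitive r (partM r I) := by
  intro i hi j hj hne
  exact ⟨hi.2 j hj.1 hne.symm, hj.2 i hi.1 hne⟩

lemma partM_partC_empty (hrefl : ∀ i, r i i)
    (htrans : ∀ i j k, r i j → r j k → r i k) (I : Set K) :
    partM r (partC r I) = ∅ := by
  ext i
  simp only [Set.mem_empty_iff_false, iff_false]
  rintro ⟨⟨hiI, hid⟩, hmax⟩
  have hiM : i ∉ partM r I := fun hM => hid ⟨hiI, ⟨i, hM, hrefl i⟩⟩
  have hex : ∃ j, j ∈ I ∧ j ≠ i ∧ r i j := by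
    by_contra hc
    push_neg at hc
    exact hiM ⟨hiI, fun j hj hne => hc j hj hne⟩
  obtain ⟨j, hjI, hne, hij⟩ := hex
  have hjc : j ∈ partC r I := by
    refine ⟨hjI, fun hjd => ?_⟩
    obtain ⟨m, hm, hjm⟩ := hjd.2
    exact hid ⟨hiI, m, hm, htrans _ _ _ hij hjm⟩
  exact hmax j hjc hne hij

lemma partC_partC (hrefl : ∀ i, r i i)
    (htrans : ∀ i j k, r i j → r j k → r i k) (I : Set K) :
    partC r (partC r I) = partC r I := by
  have h1 : partD r (partC r I) = ∅ := by
    ext i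
    simp only [partD, partM_partC_empty hrefl htrans, Set.mem_setOf_eq,
      Set.mem_empty_iff_false, iff_false, not_and]
    rintro _ ⟨m, hm, _⟩
    exact hm
  show partC r I \ partD r (partC r I) = partC r I
  rw [h1, Set.diff_empty]

lemma plus_partC_mem_chainReps (hrefl : ∀ i, r i i)
    (htrans : ∀ i j k, r i j → r j k → r i k) (I : Set K) :
    plusSet r (partC r I) ∈ chainReps r :=
  ⟨partC r I, (partC_partC hrefl htrans I).symm, rfl⟩

lemma plusSet_idem (hrefl : ∀ i, r i i)
    (htrans : ∀ i j k, r i j → r j k → r i k) (I : Set K) :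
    plusSet r (plusSet r I) = plusSet r I := by
  apply subset_antisymm
  · rintro i ⟨j, ⟨k, hk, hjk⟩, hij⟩
    exact ⟨k, hk, htrans _ _ _ hij hjk⟩
  · intro i hi
    exact ⟨i, hi, hrefl i⟩

lemma chainReps_inj (hrefl : ∀ i, r i i)
    (htrans : ∀ i j k, r i j → r j k → r i k)
    {I J : Set K} (hI : I ∈ chainReps r) (hJ : J ∈ chainReps r)
    (h : SetEquiv r I J) : I = J := by
  obtain ⟨I0, _, hI0⟩ := hI
  obtain ⟨J0, _, hJ0⟩ := hJ
  have hIplus : plusSet r I = I := by rw [← hI0, plusSet_idem hrefl htrans]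
  have hJplus : plusSet r J = J := by rw [← hJ0, plusSet_idem hrefl htrans]
  apply subset_antisymm
  · intro i hi
    obtain ⟨j, hj, hij⟩ := h.1 i hi
    rw [← hJplus]
    exact ⟨j, hj, hij⟩
  · intro j hj
    obtain ⟨i, hi, hji⟩ := h.2 j hj
    rw [← hIplus]
    exact ⟨i, hi, hji⟩

lemma primitive_inj (htrans : ∀ i j k, r i j → r j k → r i k)
    (hanti : ∀ i j, r i j → r j i → i = j)
    {I J : Set K} (hI : Primitive r I) (hJ : Primitive r J)
    (h : SetEquiv r I J) : I = J := by
  have key : ∀ {A B : Set K}, Primitive r A → SetEquiv r A B → A ⊆ B := by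
    intro A B hA hAB i hi
    obtain ⟨j, hj, hij⟩ := hAB.1 i hi
    obtain ⟨i', hi', hji'⟩ := hAB.2 j hj
    have hii' : r i i' := htrans _ _ _ hij hji'
    have he : i = i' := by
      by_contra hne
      exact (hA i hi i' hi' hne).1 hii'
    subst he
    have : i = j := hanti _ _ hij hji'
    rwa [this]
  exact subset_antisymm (key hI h) (key hJ (setEquiv_symm h))

end Aux

theorem quotient_cardinality (r : K → K → Prop)
    (hrefl : ∀ i, r i i) (htrans : ∀ i j k, r i j → r j k → r i k)
    (hanti : ∀ i j, r i j → r j i → i = j) :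
    ((Countable (Quotient (setEquivSetoid r hrefl htrans)) ∧
        Infinite (Quotient (setEquivSetoid r hrefl htrans))) ↔
      ({I : Set K | Primitive r I}.Countable ∧ (chainReps r).Countable ∧
        ({I : Set K | Primitive r I}.Infinite ∨ (chainReps r).Infinite))) ∧
    (¬ Countable (Quotient (setEquivSetoid r hrefl htrans)) ↔
      (¬ {I : Set K | Primitive r I}.Countable ∨ ¬ (chainReps r).Countable)) := by
  set S := setEquivSetoid r hrefl htrans with hS
  set P : Set (Set K) := {I : Set K | Primitive r I} with hP
  set C : Set (Set K) := chainReps r with hC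
  have hexact : ∀ {I J : Set K}, Quotient.mk S I = Quotient.mk S J → SetEquiv r I J :=
    fun h => Quotient.exact h
  -- the canonical-form map
  have hwd : ∀ (I J : Set K), SetEquiv r I J →
      (partM r I, plusSet r (partC r I)) = (partM r J, plusSet r (partC r J)) := by
    intro I J h
    exact Prod.ext (partM_eq_of_equiv htrans hanti h) (plus_partC_eq_of_equiv htrans hanti h)
  let F : Quotient S → Set K × Set K :=
    Quotient.lift (fun I => (partM r I, plusSet r (partC r I))) hwd
  have hFinj : Function.Injective F := by
    intro x y
    induction x using Quotient.inductionOn with | h I =>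
    induction y using Quotient.inductionOn with | h J =>
    intro h
    have h1 : partM r I = partM r J := congrArg Prod.fst h
    have h2 : plusSet r (partC r I) = plusSet r (partC r J) := congrArg Prod.snd h
    apply Quotient.sound
    have e1 := canonical_equiv (r := r) hrefl I
    have e2 := canonical_equiv (r := r) hrefl J
    rw [h1, h2] at e1
    exact setEquiv_trans htrans e1 (setEquiv_symm e2)
  have hrange : ∀ x, F x ∈ P ×ˢ C := by
    intro x
    induction x using Quotient.inductionOn with | h I =>
    exact ⟨primitive_partM I, plus_partC_mem_chainReps hrefl htrans I⟩
  -- injections of P and C into the quotient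
  let gP : P → Quotient S := fun I => Quotient.mk S I.1
  have hgP : Function.Injective gP := by
    intro I J h
    exact Subtype.ext (primitive_inj htrans hanti I.2 J.2 (hexact h))
  let gC : C → Quotient S := fun I => Quotient.mk S I.1
  have hgC : Function.Injective gC := by
    intro I J h
    exact Subtype.ext (chainReps_inj hrefl htrans I.2 J.2 (hexact h))
  -- cardinality facts
  have hcount : ∀ (_ : P.Countable) (_ : C.Countable), Countable (Quotient S) := by
    intro hPc hCc
    haveI := (hPc.prod hCc).to_subtype
    exact Function.Injective.countable
      ((Set.injective_codRestrict hrange).mpr hFinj) (f := Set.codRestrict F _ hrange)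
  have hPcount : Countable (Quotient S) → P.Countable := by
    intro h
    rw [← Set.countable_coe_iff]
    exact Function.Injective.countable hgP
  have hCcount : Countable (Quotient S) → C.Countable := by
    intro h
    rw [← Set.countable_coe_iff]
    exact Function.Injective.countable hgC
  have hfin : P.Finite → C.Finite → Finite (Quotient S) := by
    intro hPf hCf
    haveI := (hPf.prod hCf).to_subtype
    exact Finite.of_injective (Set.codRestrict F _ hrange)
      ((Set.injective_codRestrict hrange).mpr hFinj)
  have hPinf : P.Infinite → Infinite (Quotient S) := by
    intro h
    haveI := h.to_subtype
    exact Infinite.of_injective gP hgP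
  have hCinf : C.Infinite → Infinite (Quotient S) := by
    intro h
    haveI := h.to_subtype
    exact Infinite.of_injective gC hgC
  constructor
  · constructor
    · rintro ⟨hc, hi⟩
      refine ⟨hPcount hc, hCcount hc, ?_⟩
      by_contra hcon
      push_neg at hcon
      haveI := hfin hcon.1 hcon.2
      exact not_finite (Quotient S)
    · rintro ⟨hPc, hCc, hinf⟩
      refine ⟨hcount hPc hCc, ?_⟩
      rcases hinf with h | h
      · exact hPinf h
      · exact hCinf h
  · constructor
    · intro hq
      by_contra hcon
      push_neg at hcon
      exact hq (hcount hcon.1 hcon.2)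
    · rintro (h | h) hq
      · exact h (hPcount hq)
      · exact h (hCcount hq)
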